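/- Let n be a positive integer and let G be the n × n × n three-dimensional grid graph, whose vertices are triples in {1, …, n}³ with two triples adjacent exactly when they agree in two coordinates and differ by exactly 1 in the remaining coordinate. Then every vertex set P with |P| ≤ n − 1 satisfies |N_G(P)| ≥ |P|^{2/3}; equivalently, |N_G(P)|³ ≥ |P|². -/

import Mathlib

open SimpleGraph

/-- The (open, external) neighborhood `N_G(S)`: vertices outside `S` with a neighbor in `S`. -/
def extNeighborSet {V : Type*} (G : SimpleGraph V) (S : Set V) : Set V :=
  {v : V | v ∉ S ∧ ∃ u ∈ S, G.Adj u v}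

/-- The `n × n × n` three-dimensional grid graph: the box product of three paths on
`n` vertices. -/
def gridGraph3 (n : ℕ) : SimpleGraph (Fin n × Fin n × Fin n) :=
  (pathGraph n) □ ((pathGraph n) □ (pathGraph n))

/-- Discrete Loomis–Whitney inequality in dimension 3. -/
lemma loomis_whitney {α β γ : Type*} [DecidableEq α] [DecidableEq β] [DecidableEq γ]
    (A : Finset (α × β × γ)) :
    A.card ^ 2 ≤ (A.image fun p => (p.1, p.2.1)).card *
      ((A.image fun p => (p.1, p.2.2)).card * (A.image fun p => (p.2.1, p.2.2)).card) := by
  classical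
  set B := A.image fun p => (p.1, p.2.1) with hB
  set C := A.image fun p => (p.1, p.2.2) with hC
  set D := A.image fun p => (p.2.1, p.2.2) with hD
  set fib : α × β → Finset (α × β × γ) :=
    fun q => A.filter (fun p => (p.1, p.2.1) = q) with hfib
  have hcard : A.card = ∑ q ∈ B, (fib q).card :=
    Finset.card_eq_sum_card_image (fun p => (p.1, p.2.1)) A
  -- Step: ∑ (fib q).card ^ 2 ≤ C.card * D.card
  have hdisj : (B : Set (α × β)).PairwiseDisjoint
      (fun q => (fib q) ×ˢ (fib q)) := by
    intro q hq r hr hqr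
    simp only [Function.onFun, Finset.disjoint_left]
    rintro ⟨p, p'⟩ hp hp'
    simp only [Finset.mem_product, hfib, Finset.mem_filter] at hp hp'
    exact hqr (hp.1.2.symm.trans hp'.1.2)
  have hsum : ∑ q ∈ B, (fib q).card ^ 2 =
      (B.biUnion fun q => (fib q) ×ˢ (fib q)).card := by
    rw [Finset.card_biUnion (fun q hq r hr h => hdisj hq hr h)]
    refine Finset.sum_congr rfl fun q _ => ?_
    rw [Finset.card_product, sq]
  have hinj : (B.biUnion fun q => (fib q) ×ˢ (fib q)).card ≤ (C ×ˢ D).card := by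
    apply Finset.card_le_card_of_injOn
      (fun w => ((w.1.1, w.1.2.2), (w.2.2.1, w.2.2.2)))
    · rintro ⟨p, p'⟩ hw
      simp only [Finset.mem_coe, Finset.mem_biUnion] at hw
      obtain ⟨q, hq, hmem⟩ := hw
      simp only [Finset.mem_product, hfib, Finset.mem_filter] at hmem
      simp only [Finset.mem_coe, Finset.mem_product, hC, hD]
      exact ⟨Finset.mem_image_of_mem _ hmem.1.1, Finset.mem_image_of_mem _ hmem.2.1⟩
    · rintro ⟨p, p'⟩ hw ⟨r, r'⟩ hw' heq
      simp only [Finset.coe_biUnion, Set.mem_iUnion, Finset.mem_coe,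
        Finset.mem_product, hfib, Finset.mem_filter] at hw hw'
      obtain ⟨q, hq, ⟨⟨_, hp⟩, ⟨_, hp'⟩⟩⟩ := hw
      obtain ⟨s, hs, ⟨⟨_, hr⟩, ⟨_, hr'⟩⟩⟩ := hw'
      have h1 : p.1 = q.1 := congrArg Prod.fst hp
      have h2 : p.2.1 = q.2 := by rw [← hp]
      have h3 : p'.1 = q.1 := congrArg Prod.fst hp'
      have h4 : p'.2.1 = q.2 := by rw [← hp']
      have g1 : r.1 = s.1 := congrArg Prod.fst hr
      have g2 : r.2.1 = s.2 := by rw [← hr]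
      have g3 : r'.1 = s.1 := congrArg Prod.fst hr'
      have g4 : r'.2.1 = s.2 := by rw [← hr']
      simp only [Prod.mk.injEq] at heq
      obtain ⟨⟨e1, e2⟩, e3, e4⟩ := heq
      -- p = r and p' = r'
      have hq1 : q.1 = s.1 := by rw [← h1, e1, g1]
      have hq2 : q.2 = s.2 := by rw [← h4, e3, g4]
      refine Prod.ext ?_ ?_
      · exact Prod.ext e1 (Prod.ext (by rw [h2, hq2, ← g2]) e2)
      · exact Prod.ext (by rw [h3, hq1, ← g3]) (Prod.ext e3 e4)
  have hCS : (A.card : ℤ) ^ 2 ≤ (B.card : ℤ) * ∑ q ∈ B, ((fib q).card : ℤ) ^ 2 := by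
    have := sq_sum_le_card_mul_sum_sq (s := B) (f := fun q => ((fib q).card : ℤ))
    rwa [hcard, Nat.cast_sum]
  have hfin : (A.card : ℤ) ^ 2 ≤ (B.card : ℤ) * ((C.card : ℤ) * (D.card : ℤ)) := by
    refine hCS.trans ?_
    have : ∑ q ∈ B, ((fib q).card : ℤ) ^ 2 ≤ (C.card : ℤ) * (D.card : ℤ) := by
      have h2 : (∑ q ∈ B, (fib q).card ^ 2 : ℕ) ≤ C.card * D.card := by
        rw [hsum]; simpa [Finset.card_product] using hinj
      calc ∑ q ∈ B, ((fib q).card : ℤ) ^ 2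
          = ((∑ q ∈ B, (fib q).card ^ 2 : ℕ) : ℤ) := by push_cast; ring
        _ ≤ ((C.card * D.card : ℕ) : ℤ) := by exact_mod_cast h2
        _ = (C.card : ℤ) * (D.card : ℤ) := by push_cast; ring
    exact mul_le_mul_of_nonneg_left this (by positivity)
  exact_mod_cast hfin

/-- In a path, a nonempty set with a gap above it has a boundary point. -/
lemma path_boundary_aux {n : ℕ} (S : Set (Fin n)) {c d : Fin n}
    (hc : c ∈ S) (hd : d ∉ S) (hlt : c.val < d.val) :
    ∃ v ∉ S, ∃ u ∈ S, (pathGraph n).Adj u v := by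
  classical
  have hex : ∃ k, ∃ h : k < n, c.val < k ∧ (⟨k, h⟩ : Fin n) ∉ S :=
    ⟨d.val, d.isLt, hlt, by simpa using hd⟩
  obtain ⟨h, hck, hm⟩ := Nat.find_spec hex
  set m := Nat.find hex
  have hmn : m < n := h
  have hm1 : m - 1 < n := lt_of_le_of_lt (Nat.sub_le _ _) hmn
  have hu : (⟨m - 1, hm1⟩ : Fin n) ∈ S := by
    rcases eq_or_lt_of_le (Nat.succ_le_of_lt hck) with heq | hlt2
    · have : (⟨m - 1, hm1⟩ : Fin n) = c := by
        ext; simp; omega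
      rwa [this]
    · by_contra hns
      have : ¬ (∃ h : m - 1 < n, c.val < m - 1 ∧ (⟨m - 1, h⟩ : Fin n) ∉ S) :=
        Nat.find_min hex (by omega)
      exact this ⟨hm1, by omega, hns⟩
  refine ⟨⟨m, hmn⟩, hm, ⟨m - 1, hm1⟩, hu, ?_⟩
  rw [pathGraph_adj]
  left; simp; omega

/-- In a path, any nonempty proper set has a boundary point. -/
lemma path_boundary {n : ℕ} (S : Set (Fin n)) (hne : S.Nonempty) (hproper : S ≠ Set.univ) :
    ∃ v ∉ S, ∃ u ∈ S, (pathGraph n).Adj u v := by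
  obtain ⟨c, hc⟩ := hne
  obtain ⟨d, hd⟩ : ∃ d, d ∉ S := by
    by_contra h
    push_neg at h
    exact hproper (Set.eq_univ_of_forall h)
  rcases lt_trichotomy c.val d.val with hlt | heq | hgt
  · exact path_boundary_aux S hc hd hlt
  · exact absurd hc (by rwa [show c = d from Fin.ext heq])
  · obtain ⟨v, hv, u, hu, hadj⟩ :=
      path_boundary_aux Sᶜ (show d ∈ Sᶜ from hd) (show c ∉ Sᶜ by simpa using hc) hgt
    exact ⟨u, hu, v, by simpa using hv, hadj.symm⟩

theorem stmt6 (n : ℕ) (hn : 0 < n) (P : Set (Fin n × Fin n × Fin n))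
    (hP : P.ncard ≤ n - 1) :
    P.ncard ^ 2 ≤ (extNeighborSet (gridGraph3 n) P).ncard ^ 3 := by
  classical
  set N := extNeighborSet (gridGraph3 n) P with hN
  have hPfin : P.Finite := Set.toFinite P
  have hNfin : N.Finite := Set.toFinite N
  set A := hPfin.toFinset with hA
  set Nf := hNfin.toFinset with hNf
  -- Each line through P meets the neighborhood
  have hline : ∀ (L : Fin n → Fin n × Fin n × Fin n),
      Function.Injective L →
      (∀ i j, (pathGraph n).Adj i j → (gridGraph3 n).Adj (L i) (L j)) →
      (∃ i, L i ∈ P) → ∃ j, L j ∈ N ∧ ∃ i, L i ∈ P := by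
    intro L hLinj hLadj ⟨i0, hi0⟩
    set S : Set (Fin n) := {i | L i ∈ P} with hS
    have hSne : S.Nonempty := ⟨i0, hi0⟩
    have hSproper : S ≠ Set.univ := by
      intro hSu
      have : (L '' Set.univ).ncard ≤ P.ncard := by
        apply Set.ncard_le_ncard _ hPfin
        rintro _ ⟨i, -, rfl⟩
        have : i ∈ S := hSu ▸ Set.mem_univ i
        exact this
      rw [Set.ncard_image_of_injective _ hLinj, Set.ncard_univ, Nat.card_eq_fintype_card,
        Fintype.card_fin] at this
      omega
    obtain ⟨v, hv, u, hu, hadj⟩ := path_boundary S hSne hSproper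
    exact ⟨v, ⟨hv, L u, hu, hLadj u v hadj⟩, i0, hi0⟩
  -- Projection bounds
  have hproj12 : (A.image fun p => (p.1, p.2.1)).card ≤ Nf.card := by
    apply Finset.card_le_card_of_surjOn (fun p => (p.1, p.2.1))
    rintro ⟨a, b⟩ hq
    simp only [Finset.coe_image, Set.mem_image, Finset.mem_coe, hA,
      Set.Finite.mem_toFinset] at hq
    obtain ⟨p, hp, hpq⟩ := hq
    obtain ⟨j, hj, -⟩ := hline (fun c => (a, b, c))
      (fun i j hij => by simpa [Prod.ext_iff] using hij)
      (fun i j hij => by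
        show ((pathGraph n) □ ((pathGraph n) □ (pathGraph n))).Adj (a, b, i) (a, b, j)
        exact boxProd_adj.mpr (Or.inr ⟨boxProd_adj.mpr (Or.inr ⟨hij, rfl⟩), rfl⟩))
      ⟨p.2.2, by
        have h : p = (a, b, p.2.2) := by cases hpq; rfl
        show (a, b, p.2.2) ∈ P
        exact h ▸ hp⟩
    exact ⟨(a, b, j), Finset.mem_coe.mpr ((Set.Finite.mem_toFinset hNfin).mpr hj), rfl⟩
  have hproj13 : (A.image fun p => (p.1, p.2.2)).card ≤ Nf.card := by
    apply Finset.card_le_card_of_surjOn (fun p => (p.1, p.2.2))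
    rintro ⟨a, c⟩ hq
    simp only [Finset.coe_image, Set.mem_image, Finset.mem_coe, hA,
      Set.Finite.mem_toFinset] at hq
    obtain ⟨p, hp, hpq⟩ := hq
    obtain ⟨j, hj, -⟩ := hline (fun b => (a, b, c))
      (fun i j hij => by simpa [Prod.ext_iff] using hij)
      (fun i j hij => by
        show ((pathGraph n) □ ((pathGraph n) □ (pathGraph n))).Adj (a, i, c) (a, j, c)
        exact boxProd_adj.mpr (Or.inr ⟨boxProd_adj.mpr (Or.inl ⟨hij, rfl⟩), rfl⟩))
      ⟨p.2.1, by
        have h : p = (a, p.2.1, c) := by cases hpq; rfl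
        show (a, p.2.1, c) ∈ P
        exact h ▸ hp⟩
    exact ⟨(a, j, c), Finset.mem_coe.mpr ((Set.Finite.mem_toFinset hNfin).mpr hj), rfl⟩
  have hproj23 : (A.image fun p => (p.2.1, p.2.2)).card ≤ Nf.card := by
    apply Finset.card_le_card_of_surjOn (fun p => (p.2.1, p.2.2))
    rintro ⟨b, c⟩ hq
    simp only [Finset.coe_image, Set.mem_image, Finset.mem_coe, hA,
      Set.Finite.mem_toFinset] at hq
    obtain ⟨p, hp, hpq⟩ := hq
    obtain ⟨j, hj, -⟩ := hline (fun a => (a, b, c))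
      (fun i j hij => by simpa [Prod.ext_iff] using hij)
      (fun i j hij => by
        show ((pathGraph n) □ ((pathGraph n) □ (pathGraph n))).Adj (i, b, c) (j, b, c)
        exact boxProd_adj.mpr (Or.inl ⟨hij, rfl⟩))
      ⟨p.1, by
        have h : p = (p.1, b, c) := by cases hpq; rfl
        show (p.1, b, c) ∈ P
        exact h ▸ hp⟩
    exact ⟨(j, b, c), Finset.mem_coe.mpr ((Set.Finite.mem_toFinset hNfin).mpr hj), rfl⟩
  have hLW := loomis_whitney A
  have : A.card ^ 2 ≤ Nf.card ^ 3 := by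
    calc A.card ^ 2 ≤ _ := hLW
      _ ≤ Nf.card * (Nf.card * Nf.card) := by
          exact Nat.mul_le_mul hproj12 (Nat.mul_le_mul hproj13 hproj23)
      _ = Nf.card ^ 3 := by ring
  rwa [Set.ncard_eq_toFinset_card P hPfin, Set.ncard_eq_toFinset_card N hNfin]
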